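/- Let f : Γ → Γ' be a functor between small categories. The left Kan extension along f of the functor Γ → sSet, γ ↦ N(Γ/γ) (the nerve of the over category of objects of Γ over γ), is naturally isomorphic to the functor Γ' → sSet, γ' ↦ N(f/γ'), where f/γ' is the comma category whose objects are pairs (γ, α) of an object γ of Γ and a morphism α : f(γ) → γ' in Γ', and whose morphisms (γ₁, α₁) → (γ₂, α₂) are morphisms γ₁ → γ₂ in Γ commuting with the structure maps to γ'. -/

import Mathlib

/-!
STATEMENT 10: for a functor `f : Γ ⥤ Γ'` between small categories, the left Kan
extension along `f` of the functor `γ ↦ N(Γ/γ)` (nerves of over categories) is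
naturally isomorphic to the functor `γ' ↦ N(f/γ')` (nerves of the comma categories
`f/γ'` of pairs `(γ, α : f γ ⟶ γ')`).
-/

open CategoryTheory Limits Opposite

universe v

variable {Γ Γ' : Type v} [SmallCategory Γ] [SmallCategory Γ']

/-- The functor `γ ↦ N(Γ/γ)` sending an object of `Γ` to the nerve of the over
category `Γ/γ` (realized as the category of costructured arrows of the identity
functor). -/
noncomputable def overNerve (Γ : Type v) [SmallCategory Γ] : Γ ⥤ SSet.{v} :=
  CostructuredArrow.functor (𝟭 Γ) ⋙ nerveFunctor

/-- The functor `γ' ↦ N(f/γ')` sending an object of `Γ'` to the nerve of the comma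
category `f/γ'` whose objects are pairs `(γ, α : f γ ⟶ γ')`. -/
noncomputable def commaNerve (f : Γ ⥤ Γ') : Γ' ⥤ SSet.{v} :=
  CostructuredArrow.functor f ⋙ nerveFunctor

namespace LanNerveAux
variable (f : Γ ⥤ Γ')

/-- `Γ/γ ⥤ f/(f γ)`. -/
@[simps]
def toComma (γ : Γ) : CostructuredArrow (𝟭 Γ) γ ⥤ CostructuredArrow f (f.obj γ) where
  obj X := CostructuredArrow.mk (f.map X.hom)
  map {X Y} φ := CostructuredArrow.homMk φ.left (by
    dsimp
    rw [← f.map_comp]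
    congr 1
    simpa using CostructuredArrow.w φ)

lemma comma_fun_eq (γ γ₁ : Γ) (g : γ ⟶ γ₁) :
    CostructuredArrow.map g ⋙ toComma f γ₁ = toComma f γ ⋙ CostructuredArrow.map (f.map g) := by
  have hobj : ∀ X : CostructuredArrow (𝟭 Γ) γ,
      (CostructuredArrow.map g ⋙ toComma f γ₁).obj X =
        (toComma f γ ⋙ CostructuredArrow.map (f.map g)).obj X := by
    intro X
    dsimp [CostructuredArrow.map, Comma.mapRight, toComma]
    rw [f.map_comp]
    rfl
  exact CategoryTheory.Functor.ext hobj (fun X Y φ => by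
    apply CostructuredArrow.hom_ext
    simp [CostructuredArrow.eqToHom_left]
    erw [eqToHom_refl, eqToHom_refl, Category.id_comp, Category.comp_id]
    rfl)

noncomputable def eta : overNerve Γ ⟶ f ⋙ commaNerve f where
  app γ := nerveFunctor.map (toComma f γ).toCatHom
  naturality {γ γ₁} g := by
    dsimp [overNerve, commaNerve]
    erw [← nerveFunctor.map_comp, ← nerveFunctor.map_comp]
    congr 1
    ext
    exact comma_fun_eq f γ γ₁ g

variable {γ' : Γ'} {m : ℕ}

/-- Lift a chain in `f/γ'` to a chain in `Γ/(last object)`. -/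
@[simps]
def liftChain (c : ComposableArrows (CostructuredArrow f γ') m) :
    ComposableArrows (CostructuredArrow (𝟭 Γ) (c.obj (Fin.last m)).left) m where
  obj i := CostructuredArrow.mk ((c.map (homOfLE (Fin.le_last i))).left)
  map {i j} h := CostructuredArrow.homMk (c.map h).left (by
    dsimp
    rw [← CostructuredArrow.comp_left, ← c.map_comp]
    congr 1)
  map_id i := by
    apply CostructuredArrow.hom_ext
    simp
  map_comp h h' := by
    apply CostructuredArrow.hom_ext
    simp

lemma lemA (c : ComposableArrows (CostructuredArrow f γ') m) :
    (liftChain f c ⋙ toComma f (c.obj (Fin.last m)).left) ⋙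
      CostructuredArrow.map (c.obj (Fin.last m)).hom = c := by
  have hobj : ∀ i, ((liftChain f c ⋙ toComma f (c.obj (Fin.last m)).left) ⋙
      CostructuredArrow.map (c.obj (Fin.last m)).hom).obj i = c.obj i := by
    intro i
    conv_rhs => rw [CostructuredArrow.eq_mk (c.obj i),
      ← CostructuredArrow.w (c.map (homOfLE (Fin.le_last i)))]
    rfl
  refine ComposableArrows.ext hobj (fun i hi => ?_)
  apply CostructuredArrow.hom_ext
  simp [CostructuredArrow.eqToHom_left, toComma]
  erw [Comma.eqToHom_left, Comma.eqToHom_left, eqToHom_refl, eqToHom_refl, Category.id_comp, Category.comp_id]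
  rfl

lemma lemB (d : CostructuredArrow f γ') (e : ComposableArrows (CostructuredArrow (𝟭 Γ) d.left) m) :
    liftChain f ((e ⋙ toComma f d.left) ⋙ CostructuredArrow.map d.hom) ⋙
      CostructuredArrow.map (e.obj (Fin.last m)).hom = e := by
  have hobj : ∀ i, (liftChain f ((e ⋙ toComma f d.left) ⋙ CostructuredArrow.map d.hom) ⋙
      CostructuredArrow.map (e.obj (Fin.last m)).hom).obj i = e.obj i := by
    intro i
    conv_rhs => rw [CostructuredArrow.eq_mk (e.obj i),
      ← CostructuredArrow.w (e.map (homOfLE (Fin.le_last i)))]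
    rfl
  refine ComposableArrows.ext hobj (fun i hi => ?_)
  apply CostructuredArrow.hom_ext
  simp [CostructuredArrow.eqToHom_left, toComma]
  erw [Comma.eqToHom_left, Comma.eqToHom_left, eqToHom_refl, eqToHom_refl, Category.id_comp, Category.comp_id]
  rfl

noncomputable def isColimitAt (γ' : Γ') (Δ : SimplexCategoryᵒᵖ) :
    IsColimit (((evaluation SimplexCategoryᵒᵖ (Type v)).obj Δ).mapCocone
      ((Functor.LeftExtension.mk (commaNerve f) (eta f)).coconeAt γ')) where
  desc s := ↾fun c => s.ι.app (c.obj (Fin.last Δ.unop.len)) (liftChain f c)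
  fac s d := by
    ext e
    let c' : ComposableArrows (CostructuredArrow f γ') Δ.unop.len :=
      (e ⋙ toComma f d.left) ⋙ CostructuredArrow.map d.hom
    let u : c'.obj (Fin.last Δ.unop.len) ⟶ d :=
      CostructuredArrow.homMk (e.obj (Fin.last Δ.unop.len)).hom rfl
    have hw := ConcreteCategory.congr_hom (s.w u) (liftChain f c')
    show s.ι.app (c'.obj (Fin.last Δ.unop.len)) (liftChain f c') = s.ι.app d e
    rw [← hw]
    exact congrArg (s.ι.app d) (lemB f d e)
  uniq s md h := by
    ext c
    have h1 := ConcreteCategory.congr_hom (h (c.obj (Fin.last Δ.unop.len))) (liftChain f c)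
    show md c = s.ι.app (c.obj (Fin.last Δ.unop.len)) (liftChain f c)
    conv_lhs => rw [← lemA f c]
    exact h1

noncomputable def isPointwise :
    (Functor.LeftExtension.mk (commaNerve f) (eta f)).IsPointwiseLeftKanExtension :=
  fun γ' => evaluationJointlyReflectsColimits _ (fun Δ => isColimitAt f γ' Δ)

end LanNerveAux

/-- The left Kan extension of `γ ↦ N(Γ/γ)` along `f` is the functor `γ' ↦ N(f/γ')`. -/
theorem lan_overNerve_iso_commaNerve (f : Γ ⥤ Γ') :
    Nonempty (f.lan.obj (overNerve Γ) ≅ commaNerve f) := by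
  haveI : (commaNerve f).IsLeftKanExtension (LanNerveAux.eta f) :=
    (LanNerveAux.isPointwise f).isLeftKanExtension
  exact ⟨Functor.leftKanExtensionUnique _ (f.lanUnit.app (overNerve Γ)) _ (LanNerveAux.eta f)⟩
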